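/- arXiv:2211.14687 — 2 statements merged into one kernel-verified Lean document; each statement's English description precedes it below -/
import Mathlib

section
/- Let S be a random subset of [n] (identified with its indicator vector in {0,1}^n) whose indicator vector is negatively dependent, and let S' be an independent copy of S. Then for any a ≥ 1, E[a^{|S ∩ S'|}] ≤ exp((a−1) · ∑_{i=1}^n P[i ∈ S]^2). -/
open MeasureTheory

/-- If `S` is a negatively dependent random subset of `[n]` and `S'` an independent copy of `S`
(realized on the product space), then for any `a ≥ 1`,
`E[a^{|S ∩ S'|}] ≤ exp((a−1) ∑_i P[i ∈ S]²)`. -/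
theorem nd_exponential_moment_bound {Ω : Type*} [MeasurableSpace Ω] (μ : Measure Ω)
    [IsProbabilityMeasure μ] (n : ℕ) (S : Ω → Finset (Fin n))
    (hmeas : ∀ i, MeasurableSet {ω | i ∈ S ω})
    (hND : ∀ A : Finset (Fin n),
      ∫ ω, ∏ i ∈ A, (if i ∈ S ω then (1 : ℝ) else 0) ∂μ
        ≤ ∏ i ∈ A, (μ {ω | i ∈ S ω}).toReal)
    (a : ℝ) (ha : 1 ≤ a) :
    ∫ q, a ^ (S q.1 ∩ S q.2).card ∂(μ.prod μ)
      ≤ Real.exp ((a - 1) * ∑ i, ((μ {ω | i ∈ S ω}).toReal) ^ 2) := by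
  classical
  set p : Fin n → ℝ := fun i => (μ {ω | i ∈ S ω}).toReal with hp
  set ind : Fin n → Ω → ℝ := fun i ω => if i ∈ S ω then 1 else 0 with hind
  have hmeas_ind : ∀ i, Measurable (ind i) := fun i =>
    Measurable.ite (hmeas i) measurable_const measurable_const
  have hind_nonneg : ∀ i ω, 0 ≤ ind i ω := by
    intro i ω; simp only [hind]; split <;> norm_num
  have hind_le : ∀ i ω, ind i ω ≤ 1 := by
    intro i ω; simp only [hind]; split <;> norm_num
  have hp_nonneg : ∀ i, 0 ≤ p i := fun i => ENNReal.toReal_nonneg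
  have hfmeas : ∀ t : Finset (Fin n), Measurable (fun ω => ∏ i ∈ t, ind i ω) :=
    fun t => Finset.measurable_prod _ (fun i _ => hmeas_ind i)
  have hf_nonneg : ∀ (t : Finset (Fin n)) ω, 0 ≤ ∏ i ∈ t, ind i ω :=
    fun t ω => Finset.prod_nonneg fun i _ => hind_nonneg i ω
  have hf_le : ∀ (t : Finset (Fin n)) ω, ∏ i ∈ t, ind i ω ≤ 1 :=
    fun t ω => Finset.prod_le_one (fun i _ => hind_nonneg i ω) (fun i _ => hind_le i ω)
  have hfint : ∀ t : Finset (Fin n), Integrable (fun ω => ∏ i ∈ t, ind i ω) μ := by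
    intro t
    refine (integrable_const (1 : ℝ)).mono' (hfmeas t).aestronglyMeasurable ?_
    filter_upwards with ω
    rw [Real.norm_eq_abs, abs_of_nonneg (hf_nonneg t ω)]
    exact hf_le t ω
  -- pointwise identity
  have hpoint : ∀ q : Ω × Ω, (a : ℝ) ^ (S q.1 ∩ S q.2).card
      = ∑ t ∈ (Finset.univ : Finset (Fin n)).powerset,
          (a - 1) ^ t.card * ((∏ i ∈ t, ind i q.1) * (∏ i ∈ t, ind i q.2)) := by
    intro q
    have h1 : ∀ i : Fin n, ((a - 1) * (ind i q.1 * ind i q.2)) + 1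
        = if i ∈ S q.1 ∩ S q.2 then a else 1 := by
      intro i
      by_cases h1 : i ∈ S q.1 <;> by_cases h2 : i ∈ S q.2 <;>
        simp [hind, h1, h2, Finset.mem_inter]
    have h2 : (a : ℝ) ^ (S q.1 ∩ S q.2).card
        = ∏ i : Fin n, (((a - 1) * (ind i q.1 * ind i q.2)) + 1) := by
      rw [Finset.prod_congr rfl (fun i _ => h1 i), Finset.prod_ite_mem,
        Finset.univ_inter, Finset.prod_const]
    rw [h2, Finset.prod_add]
    refine Finset.sum_congr rfl fun t _ => ?_
    rw [Finset.prod_const_one, mul_one, Finset.prod_mul_distrib, Finset.prod_const,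
      Finset.prod_mul_distrib]
  have hintg : ∀ t : Finset (Fin n),
      Integrable (fun q : Ω × Ω =>
        (a - 1) ^ t.card * ((∏ i ∈ t, ind i q.1) * (∏ i ∈ t, ind i q.2))) (μ.prod μ) :=
    fun t => (Integrable.mul_prod (hfint t) (hfint t)).const_mul _
  set I : Finset (Fin n) → ℝ := fun t => ∫ ω, ∏ i ∈ t, ind i ω ∂μ with hI
  have hI_nonneg : ∀ t, 0 ≤ I t := fun t => integral_nonneg (fun ω => hf_nonneg t ω)
  have hI_le : ∀ t, I t ≤ ∏ i ∈ t, p i := fun t => hND t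
  have key : ∫ q, a ^ (S q.1 ∩ S q.2).card ∂(μ.prod μ)
      = ∑ t ∈ (Finset.univ : Finset (Fin n)).powerset, (a - 1) ^ t.card * (I t * I t) := by
    simp only [hpoint]
    rw [integral_finset_sum _ (fun t _ => hintg t)]
    refine Finset.sum_congr rfl fun t _ => ?_
    rw [integral_const_mul]
    congr 1
    exact integral_prod_mul (f := fun ω => ∏ i ∈ t, ind i ω) (g := fun ω => ∏ i ∈ t, ind i ω)
  rw [key]
  have ha' : (0 : ℝ) ≤ a - 1 := by linarith
  have step1 : ∑ t ∈ (Finset.univ : Finset (Fin n)).powerset, (a - 1) ^ t.card * (I t * I t)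
      ≤ ∑ t ∈ (Finset.univ : Finset (Fin n)).powerset,
          (a - 1) ^ t.card * ((∏ i ∈ t, p i) * (∏ i ∈ t, p i)) := by
    refine Finset.sum_le_sum fun t _ => ?_
    refine mul_le_mul_of_nonneg_left ?_ (pow_nonneg ha' _)
    exact mul_le_mul (hI_le t) (hI_le t) (hI_nonneg t)
      (Finset.prod_nonneg fun i _ => hp_nonneg i)
  refine step1.trans ?_
  have step2 : ∑ t ∈ (Finset.univ : Finset (Fin n)).powerset,
      (a - 1) ^ t.card * ((∏ i ∈ t, p i) * (∏ i ∈ t, p i))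
      = ∏ i : Fin n, ((a - 1) * p i ^ 2 + 1) := by
    rw [Finset.prod_add]
    refine Finset.sum_congr rfl fun t _ => ?_
    rw [Finset.prod_const_one, mul_one, Finset.prod_mul_distrib, Finset.prod_const]
    congr 1
    rw [← Finset.prod_mul_distrib]
    exact Finset.prod_congr rfl fun i _ => (sq (p i)).symm
  rw [step2]
  have step3 : ∏ i : Fin n, ((a - 1) * p i ^ 2 + 1)
      ≤ ∏ i : Fin n, Real.exp ((a - 1) * p i ^ 2) := by
    refine Finset.prod_le_prod (fun i _ => by positivity) fun i _ => ?_
    exact Real.add_one_le_exp _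
  refine step3.trans ?_
  rw [← Real.exp_sum, ← Finset.mul_sum]
end

section
/- Let μ be a measure on {0,1}^n obtained by sampling a random subset S ⊆ [n] according to a law μ̃ whose indicator vector is negatively dependent, then, conditionally on S, sampling the coordinates in S by some arbitrary law φ_S and the coordinates outside S independently as i.i.d. Bernoulli(p). Let ν = Ber(p)^⊗n and a = max(1/p, 1/(1−p)). Then 4 d_TV(μ,ν)^2 ≤ exp((a−1) ∑_{i=1}^n P[i ∈ S]^2) − 1. -/
open Finset
section Aux
variable {n : ℕ}

private def supp (T : Finset (Fin n)) : Finset (Fin n → Bool) :=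
  Finset.univ.filter (fun y => ∀ i ∉ T, y i = false)

private lemma mem_supp {T : Finset (Fin n)} {y : Fin n → Bool} :
    y ∈ supp T ↔ ∀ i ∉ T, y i = false := by simp [supp]

private def mix (y z : Fin n → Bool) : Fin n → Bool := fun i => y i || z i

private def proj (T : Finset (Fin n)) (x : Fin n → Bool) : Fin n → Bool :=
  fun i => if i ∈ T then x i else false

private lemma proj_mem_supp (T : Finset (Fin n)) (x : Fin n → Bool) :
    proj T x ∈ supp T := by
  rw [mem_supp]; intro i hi; simp [proj, hi]

private lemma supp_univ : supp (Finset.univ : Finset (Fin n)) = Finset.univ := by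
  ext y; simp [mem_supp]

private lemma split (T U : Finset (Fin n)) (hTU : Disjoint T U) (h : (Fin n → Bool) → ℝ) :
    ∑ x ∈ supp (T ∪ U), h x = ∑ y ∈ supp T, ∑ z ∈ supp U, h (mix y z) := by
  rw [← Finset.sum_product']
  refine Finset.sum_nbij' (fun x => (proj T x, proj U x)) (fun yz => mix yz.1 yz.2)
    ?_ ?_ ?_ ?_ ?_
  · intro x hx
    rw [Finset.mem_product]
    exact ⟨proj_mem_supp T x, proj_mem_supp U x⟩
  · intro yz hyz
    rw [Finset.mem_product] at hyz
    rw [mem_supp]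
    intro i hi
    simp only [Finset.mem_union, not_or] at hi
    simp [mix, mem_supp.1 hyz.1 i hi.1, mem_supp.1 hyz.2 i hi.2]
  · intro x hx
    funext i
    by_cases hT : i ∈ T
    · have hU : i ∉ U := Finset.disjoint_left.1 hTU hT
      simp [mix, proj, hT, hU]
    · by_cases hU : i ∈ U
      · simp [mix, proj, hT, hU]
      · have : x i = false := mem_supp.1 hx i (by simp [hT, hU])
        simp [mix, proj, hT, hU, this]
  · intro yz hyz
    rw [Finset.mem_product] at hyz
    have h1 : proj T (mix yz.1 yz.2) = yz.1 := by
      funext i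
      by_cases hT : i ∈ T
      · have hU : i ∉ U := Finset.disjoint_left.1 hTU hT
        simp [mix, proj, hT, mem_supp.1 hyz.2 i hU]
      · simp [proj, hT, (mem_supp.1 hyz.1 i hT).symm]
    have h2 : proj U (mix yz.1 yz.2) = yz.2 := by
      funext i
      by_cases hU : i ∈ U
      · have hT : i ∉ T := Finset.disjoint_right.1 hTU hU
        simp [mix, proj, hU, mem_supp.1 hyz.1 i hT]
      · simp [proj, hU, (mem_supp.1 hyz.2 i hU).symm]
    simp [h1, h2]
  · intro x hx
    congr 1
    funext i
    by_cases hT : i ∈ T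
    · have hU : i ∉ U := Finset.disjoint_left.1 hTU hT
      simp [mix, proj, hT, hU]
    · by_cases hU : i ∈ U
      · simp [mix, proj, hT, hU]
      · have : x i = false := mem_supp.1 hx i (by simp [hT, hU])
        simp [mix, proj, hT, hU, this]

private lemma sum_supp_eq (T : Finset (Fin n)) (F : (Fin n → Bool) → ℝ) :
    ∑ y ∈ supp T, F y
      = ∑ u : {i // i ∈ T} → Bool, F (fun i => if h : i ∈ T then u ⟨i, h⟩ else false) := by
  refine Finset.sum_nbij' (fun y (i : {i // i ∈ T}) => y i.1)
    (fun u => fun i => if h : i ∈ T then u ⟨i, h⟩ else false) ?_ ?_ ?_ ?_ ?_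
  · intro y _; exact Finset.mem_univ _
  · intro u _
    rw [mem_supp]; intro i hi; simp [hi]
  · intro y hy
    funext i
    by_cases h : i ∈ T
    · simp [h]
    · simp [h, (mem_supp.1 hy i h).symm]
  · intro u _
    funext i
    simp [i.2]
  · intro y hy
    congr 1
    funext i
    by_cases h : i ∈ T
    · simp [h]
    · simp [h, (mem_supp.1 hy i h).symm]

private lemma bern {p : ℝ} (T : Finset (Fin n)) :
    p + (1 - p) = 1 →
    ∑ y ∈ supp T, ∏ i ∈ T, (if y i then p else 1 - p) = 1 := by
  intro _
  rw [sum_supp_eq T (fun y => ∏ i ∈ T, (if y i then p else 1 - p))]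
  have : ∀ u : {i // i ∈ T} → Bool,
      (∏ i ∈ T, (if (fun i => if h : i ∈ T then u ⟨i, h⟩ else false) i then p else 1 - p))
        = ∏ i : {i // i ∈ T}, (if u i then p else 1 - p) := by
    intro u
    rw [← Finset.prod_attach T (fun i => if (if h : i ∈ T then u ⟨i, h⟩ else false) then p else 1 - p)]
    rw [← Finset.univ_eq_attach]
    refine Finset.prod_congr rfl ?_
    intro i _
    simp [i.2]
  rw [Finset.sum_congr rfl (fun u _ => this u)]
  have hps := Finset.prod_univ_sum (fun (_ : {i // i ∈ T}) => (Finset.univ : Finset Bool))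
    (fun _ b => if b then p else 1 - p)
  rw [Fintype.piFinset_univ] at hps
  rw [← hps]
  have : ∀ i : {i // i ∈ T}, (∑ b ∈ (Finset.univ : Finset Bool), (if b then p else 1 - p)) = 1 := by
    intro i
    rw [Fintype.sum_bool]
    simpa using ‹p + (1 - p) = 1›
  rw [Finset.prod_congr rfl (fun i _ => this i)]
  simp

private lemma proj_mix_eq {S : Finset (Fin n)} {y z : Fin n → Bool} (hy : y ∈ supp S)
    (hz : ∀ i ∈ S, z i = false) : (fun i => if i ∈ S then mix y z i else false) = y := by
  funext i
  by_cases h : i ∈ S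
  · simp [mix, h, hz i h]
  · simp [h, (mem_supp.1 hy i h).symm]

private lemma marg (S' U : Finset (Fin n)) (hU : U ⊆ S') (c : Fin n → Bool)
    (hc : c ∈ supp S') (hcU : ∀ i ∈ U, c i = false)
    (g : (Fin n → Bool) → ℝ) (hg0 : ∀ w, 0 ≤ g w) (hg1 : ∑ w ∈ supp S', g w = 1) :
    ∑ z ∈ supp U, g (mix c z) ≤ 1 := by
  have hinj : ∀ z1 ∈ supp U, ∀ z2 ∈ supp U, mix c z1 = mix c z2 → z1 = z2 := by
    intro z1 h1 z2 h2 heq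
    funext i
    by_cases hiU : i ∈ U
    · have := congrFun heq i
      simpa [mix, hcU i hiU] using this
    · rw [mem_supp.1 h1 i hiU, mem_supp.1 h2 i hiU]
  rw [← hg1, ← Finset.sum_image hinj]
  apply Finset.sum_le_sum_of_subset_of_nonneg
  · intro w hw
    rw [Finset.mem_image] at hw
    obtain ⟨z, hz, rfl⟩ := hw
    rw [mem_supp]
    intro i hi
    have h1 : c i = false := mem_supp.1 hc i hi
    have h2 : z i = false := mem_supp.1 hz i (fun h => hi (hU h))
    simp [mix, h1, h2]
  · intro w _ _; exact hg0 w


private lemma sum_univ_split (S : Finset (Fin n)) (h : (Fin n → Bool) → ℝ) :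
    ∑ x : Fin n → Bool, h x = ∑ y ∈ supp S, ∑ z ∈ supp Sᶜ, h (mix y z) := by
  have h1 : (Finset.univ : Finset (Fin n → Bool)) = supp (S ∪ Sᶜ) := by
    rw [Finset.union_compl, supp_univ]
  rw [h1]
  exact split S Sᶜ disjoint_compl_right h

end Aux

/-- Negatively dependent perturbation of a product measure. `μ` is obtained by sampling a
random subset `S ⊆ [n]` with law `μt` (whose indicator vector is negatively dependent), then
sampling the coordinates in `S` by an arbitrary law `φ S` (a distribution on configurations
supported on `S`) and the coordinates outside `S` as i.i.d. Bernoulli(p). With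
`ν = Ber(p)^⊗n` and `a = max(1/p, 1/(1−p))`:
`4 d_TV(μ,ν)² ≤ exp((a−1) ∑_i P[i ∈ S]²) − 1`. -/
theorem nd_perturbation_of_product (n : ℕ) (p : ℝ) (hp : 0 < p) (hp1 : p < 1)
    (μt : Finset (Fin n) → ℝ) (hμt0 : ∀ S, 0 ≤ μt S) (hμt1 : ∑ S, μt S = 1)
    (hND : ∀ A : Finset (Fin n),
      (∑ S, if A ⊆ S then μt S else 0) ≤ ∏ i ∈ A, ∑ S, if i ∈ S then μt S else 0)
    (φ : Finset (Fin n) → (Fin n → Bool) → ℝ)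
    (hφ0 : ∀ S y, 0 ≤ φ S y)
    (hφ1 : ∀ S : Finset (Fin n),
      ∑ y ∈ Finset.univ.filter (fun y : Fin n → Bool => ∀ i ∉ S, y i = false), φ S y = 1)
    (μ : (Fin n → Bool) → ℝ)
    (hμ : ∀ x, μ x = ∑ S, μt S * φ S (fun i => if i ∈ S then x i else false)
      * ∏ i ∈ Sᶜ, (if x i then p else 1 - p))
    (ν : (Fin n → Bool) → ℝ)
    (hν : ∀ x, ν x = ∏ i, (if x i then p else 1 - p))
    (a : ℝ) (ha : a = max (1 / p) (1 / (1 - p))) :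
    ∀ A : Finset (Fin n → Bool),
      4 * (∑ x ∈ A, μ x - ∑ x ∈ A, ν x) ^ 2
        ≤ Real.exp ((a - 1) * ∑ i, (∑ S, if i ∈ S then μt S else 0) ^ 2) - 1 := by
  intro A
  have hp1' : 0 < 1 - p := by linarith
  have hbsum : p + (1 - p) = 1 := by ring
  have hbpos : ∀ t : Bool, (0:ℝ) < (if t then p else 1 - p) := by
    intro t; cases t
    · simpa using hp1'
    · simpa using hp
  have hbinv : ∀ t : Bool, ((if t then p else 1 - p) : ℝ)⁻¹ ≤ a := by
    intro t
    cases t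
    · rw [ha, show ((if false then p else 1 - p) : ℝ) = 1 - p by simp, ← one_div]
      exact le_max_right _ _
    · rw [ha, show ((if true then p else 1 - p) : ℝ) = p by simp, ← one_div]
      exact le_max_left _ _
  have ha1 : (1:ℝ) ≤ a := by
    have : (1:ℝ) ≤ 1 / p := by
      rw [le_div_iff₀ hp]; linarith
    exact le_trans this (ha ▸ le_max_left _ _)
  have hφ1' : ∀ S : Finset (Fin n), ∑ y ∈ supp S, φ S y = 1 := hφ1
  -- total mass of μ
  have hmassS : ∀ S : Finset (Fin n),
      ∑ x : Fin n → Bool, μt S * φ S (fun i => if i ∈ S then x i else false)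
        * ∏ i ∈ Sᶜ, (if x i then p else 1 - p) = μt S := by
    intro S
    rw [sum_univ_split S]
    have hstep : ∀ y ∈ supp S, ∀ z ∈ supp Sᶜ,
        μt S * φ S (fun i => if i ∈ S then mix y z i else false)
          * ∏ i ∈ Sᶜ, (if mix y z i then p else 1 - p)
        = (μt S * φ S y) * ∏ i ∈ Sᶜ, (if z i then p else 1 - p) := by
      intro y hy z hz
      have h1 : (fun i => if i ∈ S then mix y z i else false) = y :=
        proj_mix_eq hy (fun i hi => mem_supp.1 hz i (by simpa using hi))
      have h2 : ∏ i ∈ Sᶜ, (if mix y z i then p else 1 - p)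
          = ∏ i ∈ Sᶜ, (if z i then p else 1 - p) := by
        refine Finset.prod_congr rfl (fun i hi => ?_)
        have : y i = false := mem_supp.1 hy i (by simpa using hi)
        simp [mix, this]
      rw [h1, h2, mul_assoc]
    calc ∑ y ∈ supp S, ∑ z ∈ supp Sᶜ,
          μt S * φ S (fun i => if i ∈ S then mix y z i else false)
            * ∏ i ∈ Sᶜ, (if mix y z i then p else 1 - p)
        = ∑ y ∈ supp S, ∑ z ∈ supp Sᶜ,
            (μt S * φ S y) * ∏ i ∈ Sᶜ, (if z i then p else 1 - p) := by
          refine Finset.sum_congr rfl (fun y hy => Finset.sum_congr rfl (fun z hz => ?_))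
          exact hstep y hy z hz
      _ = (∑ y ∈ supp S, μt S * φ S y) * ∑ z ∈ supp Sᶜ, ∏ i ∈ Sᶜ, (if z i then p else 1 - p) := by
          rw [Finset.sum_mul_sum]
      _ = μt S := by
          rw [bern Sᶜ hbsum, ← Finset.mul_sum, hφ1' S]
          ring
  have hmass : ∑ x : Fin n → Bool, μ x = 1 := by
    calc ∑ x : Fin n → Bool, μ x
        = ∑ x : Fin n → Bool, ∑ S : Finset (Fin n), μt S
            * φ S (fun i => if i ∈ S then x i else false)
            * ∏ i ∈ Sᶜ, (if x i then p else 1 - p) := by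
          exact Finset.sum_congr rfl (fun x _ => hμ x)
      _ = ∑ S : Finset (Fin n), ∑ x : Fin n → Bool, μt S
            * φ S (fun i => if i ∈ S then x i else false)
            * ∏ i ∈ Sᶜ, (if x i then p else 1 - p) := Finset.sum_comm
      _ = ∑ S : Finset (Fin n), μt S := Finset.sum_congr rfl (fun S _ => hmassS S)
      _ = 1 := hμt1
  have hνpos : ∀ x, 0 < ν x := by
    intro x
    rw [hν]
    exact Finset.prod_pos (fun i _ => hbpos (x i))
  have hνmass : ∑ x : Fin n → Bool, ν x = 1 := by
    calc ∑ x : Fin n → Bool, ν x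
        = ∑ x : Fin n → Bool, ∏ i, (if x i then p else 1 - p) :=
          Finset.sum_congr rfl (fun x _ => hν x)
      _ = ∑ x ∈ supp (Finset.univ : Finset (Fin n)), ∏ i, (if x i then p else 1 - p) := by
          rw [supp_univ]
      _ = 1 := bern Finset.univ hbsum
  -- Cauchy-Schwarz: 4 Δ² ≤ χ²
  have hdiff0 : ∑ x : Fin n → Bool, (μ x - ν x) = 0 := by
    rw [Finset.sum_sub_distrib, hmass, hνmass, sub_self]
  have hsplitA : ∑ x ∈ A, (μ x - ν x) + ∑ x ∈ Aᶜ, (μ x - ν x) = 0 := by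
    rw [Finset.sum_add_sum_compl]; exact hdiff0
  have hkey : ∑ x : Fin n → Bool, (if x ∈ A then (1:ℝ) else -1) * (μ x - ν x)
      = 2 * (∑ x ∈ A, μ x - ∑ x ∈ A, ν x) := by
    have e1 : ∑ x : Fin n → Bool, (if x ∈ A then (1:ℝ) else -1) * (μ x - ν x)
        = ∑ x ∈ A, (if x ∈ A then (1:ℝ) else -1) * (μ x - ν x)
          + ∑ x ∈ Aᶜ, (if x ∈ A then (1:ℝ) else -1) * (μ x - ν x) :=
      (Finset.sum_add_sum_compl A _).symm
    have e2 : ∑ x ∈ A, (if x ∈ A then (1:ℝ) else -1) * (μ x - ν x) = ∑ x ∈ A, (μ x - ν x) :=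
      Finset.sum_congr rfl (fun x hx => by rw [if_pos hx, one_mul])
    have e3 : ∑ x ∈ Aᶜ, (if x ∈ A then (1:ℝ) else -1) * (μ x - ν x)
        = - ∑ x ∈ Aᶜ, (μ x - ν x) := by
      rw [← Finset.sum_neg_distrib]
      refine Finset.sum_congr rfl (fun x hx => ?_)
      rw [if_neg (Finset.mem_compl.1 hx)]
      ring
    have e4 : ∑ x ∈ A, (μ x - ν x) = ∑ x ∈ A, μ x - ∑ x ∈ A, ν x :=
      Finset.sum_sub_distrib _ _
    rw [e1, e2, e3]
    linarith
  have hCS : 4 * (∑ x ∈ A, μ x - ∑ x ∈ A, ν x) ^ 2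
      ≤ ∑ x : Fin n → Bool, (μ x - ν x) ^ 2 / ν x := by
    have hrw : ∀ x : Fin n → Bool, (if x ∈ A then (1:ℝ) else -1) * (μ x - ν x)
        = ((if x ∈ A then (1:ℝ) else -1) * Real.sqrt (ν x))
          * ((μ x - ν x) / Real.sqrt (ν x)) := by
      intro x
      have hssq : Real.sqrt (ν x) ≠ 0 := ne_of_gt (Real.sqrt_pos.2 (hνpos x))
      field_simp
    have hsq1 : ∀ x : Fin n → Bool,
        ((if x ∈ A then (1:ℝ) else -1) * Real.sqrt (ν x)) ^ 2 = ν x := by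
      intro x
      rw [mul_pow]
      have : ((if x ∈ A then (1:ℝ) else -1)) ^ 2 = 1 := by
        by_cases h : x ∈ A <;> simp [h]
      rw [this, one_mul, Real.sq_sqrt (hνpos x).le]
    have hsq2 : ∀ x : Fin n → Bool,
        ((μ x - ν x) / Real.sqrt (ν x)) ^ 2 = (μ x - ν x) ^ 2 / ν x := by
      intro x
      rw [div_pow, Real.sq_sqrt (hνpos x).le]
    calc 4 * (∑ x ∈ A, μ x - ∑ x ∈ A, ν x) ^ 2
        = (∑ x : Fin n → Bool, (if x ∈ A then (1:ℝ) else -1) * (μ x - ν x)) ^ 2 := by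
          rw [hkey]; ring
      _ = (∑ x : Fin n → Bool, ((if x ∈ A then (1:ℝ) else -1) * Real.sqrt (ν x))
            * ((μ x - ν x) / Real.sqrt (ν x))) ^ 2 := by
          rw [Finset.sum_congr rfl (fun x _ => hrw x)]
      _ ≤ (∑ x : Fin n → Bool, ((if x ∈ A then (1:ℝ) else -1) * Real.sqrt (ν x)) ^ 2)
            * ∑ x : Fin n → Bool, ((μ x - ν x) / Real.sqrt (ν x)) ^ 2 :=
          Finset.sum_mul_sq_le_sq_mul_sq _ _ _
      _ = (∑ x : Fin n → Bool, ν x) * ∑ x : Fin n → Bool, (μ x - ν x) ^ 2 / ν x := by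
          rw [Finset.sum_congr rfl (fun x _ => hsq1 x), Finset.sum_congr rfl (fun x _ => hsq2 x)]
      _ = ∑ x : Fin n → Bool, (μ x - ν x) ^ 2 / ν x := by rw [hνmass, one_mul]
  have hχ : ∑ x : Fin n → Bool, (μ x - ν x) ^ 2 / ν x
      = (∑ x : Fin n → Bool, (μ x) ^ 2 / ν x) - 1 := by
    have hpt : ∀ x : Fin n → Bool, (μ x - ν x) ^ 2 / ν x = (μ x) ^ 2 / ν x - 2 * μ x + ν x := by
      intro x
      have h := ne_of_gt (hνpos x)
      field_simp
      ring
    rw [Finset.sum_congr rfl (fun x _ => hpt x), Finset.sum_add_distrib,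
      Finset.sum_sub_distrib, ← Finset.mul_sum, hmass, hνmass]
    ring
  -- R bound: cross term with both φ's is at most 1
  have hR : ∀ S S' : Finset (Fin n),
      ∑ x : Fin n → Bool, φ S (fun i => if i ∈ S then x i else false)
        * φ S' (fun i => if i ∈ S' then x i else false)
        * ∏ i ∈ (S ∪ S')ᶜ, (if x i then p else 1 - p) ≤ 1 := by
    intro S S'
    rw [sum_univ_split S]
    have hSc : Sᶜ = (S' \ S) ∪ (Sᶜ \ S') := by
      ext i
      simp only [Finset.mem_compl, Finset.mem_union, Finset.mem_sdiff]
      tauto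
    have hdisj2 : Disjoint (S' \ S) (Sᶜ \ S') := by
      rw [Finset.disjoint_left]
      intro i h1 h2
      exact (Finset.mem_sdiff.1 h2).2 (Finset.mem_sdiff.1 h1).1
    have hUc : (S ∪ S')ᶜ = Sᶜ \ S' := by
      ext i
      simp only [Finset.mem_compl, Finset.mem_union, Finset.mem_sdiff]
      tauto
    have hinner : ∀ y ∈ supp S,
        (∑ z ∈ supp Sᶜ, φ S (fun i => if i ∈ S then mix y z i else false)
          * φ S' (fun i => if i ∈ S' then mix y z i else false)
          * ∏ i ∈ (S ∪ S')ᶜ, (if mix y z i then p else 1 - p))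
        ≤ φ S y := by
      intro y hy
      have hyf : ∀ i, i ∉ S → y i = false := fun i => mem_supp.1 hy i
      rw [hSc, split _ _ hdisj2]
      have hpt : ∀ z1 ∈ supp (S' \ S), ∀ z2 ∈ supp (Sᶜ \ S'),
          φ S (fun i => if i ∈ S then mix y (mix z1 z2) i else false)
            * φ S' (fun i => if i ∈ S' then mix y (mix z1 z2) i else false)
            * ∏ i ∈ (S ∪ S')ᶜ, (if mix y (mix z1 z2) i then p else 1 - p)
          = (φ S y * φ S' (mix (proj S' y) z1))
            * ∏ i ∈ (S ∪ S')ᶜ, (if z2 i then p else 1 - p) := by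
        intro z1 hz1 z2 hz2
        have hz1f : ∀ i, i ∉ S' \ S → z1 i = false := fun i => mem_supp.1 hz1 i
        have hz2f : ∀ i, i ∉ Sᶜ \ S' → z2 i = false := fun i => mem_supp.1 hz2 i
        have e1 : (fun i => if i ∈ S then mix y (mix z1 z2) i else false) = y := by
          apply proj_mix_eq hy
          intro i hi
          have a1 : z1 i = false := hz1f i (by simp [hi])
          have a2 : z2 i = false := hz2f i (by simp [hi])
          simp [mix, a1, a2]
        have e2 : (fun i => if i ∈ S' then mix y (mix z1 z2) i else false)
            = mix (proj S' y) z1 := by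
          funext i
          by_cases h : i ∈ S'
          · have a2 : z2 i = false := hz2f i (by simp [h])
            simp [mix, proj, h, a2]
          · have a1 : z1 i = false := hz1f i (by simp [h])
            simp [mix, proj, h, a1]
        have e3 : ∏ i ∈ (S ∪ S')ᶜ, (if mix y (mix z1 z2) i then p else 1 - p)
            = ∏ i ∈ (S ∪ S')ᶜ, (if z2 i then p else 1 - p) := by
          refine Finset.prod_congr rfl (fun i hi => ?_)
          simp only [Finset.mem_compl, Finset.mem_union] at hi
          push_neg at hi
          have a0 : y i = false := hyf i hi.1
          have a1 : z1 i = false := hz1f i (by simp [hi.2])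
          simp [mix, a0, a1]
        rw [e1, e2, e3]
      calc ∑ z1 ∈ supp (S' \ S), ∑ z2 ∈ supp (Sᶜ \ S'),
            φ S (fun i => if i ∈ S then mix y (mix z1 z2) i else false)
              * φ S' (fun i => if i ∈ S' then mix y (mix z1 z2) i else false)
              * ∏ i ∈ (S ∪ S')ᶜ, (if mix y (mix z1 z2) i then p else 1 - p)
          = ∑ z1 ∈ supp (S' \ S), ∑ z2 ∈ supp (Sᶜ \ S'),
              (φ S y * φ S' (mix (proj S' y) z1))
                * ∏ i ∈ (S ∪ S')ᶜ, (if z2 i then p else 1 - p) := by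
            refine Finset.sum_congr rfl (fun z1 hz1 => Finset.sum_congr rfl (fun z2 hz2 => ?_))
            exact hpt z1 hz1 z2 hz2
        _ = (∑ z1 ∈ supp (S' \ S), φ S y * φ S' (mix (proj S' y) z1))
              * ∑ z2 ∈ supp (Sᶜ \ S'), ∏ i ∈ (S ∪ S')ᶜ, (if z2 i then p else 1 - p) := by
            rw [Finset.sum_mul_sum]
        _ = φ S y * ∑ z1 ∈ supp (S' \ S), φ S' (mix (proj S' y) z1) := by
            have : ∑ z2 ∈ supp (Sᶜ \ S'), ∏ i ∈ (S ∪ S')ᶜ, (if z2 i then p else 1 - p) = 1 := by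
              rw [hUc]
              exact bern (Sᶜ \ S') hbsum
            rw [this, mul_one, ← Finset.mul_sum]
        _ ≤ φ S y * 1 := by
            refine mul_le_mul_of_nonneg_left ?_ (hφ0 S y)
            refine marg S' (S' \ S) Finset.sdiff_subset (proj S' y) (proj_mem_supp S' y)
              ?_ (φ S') (hφ0 S') (hφ1' S')
            intro i hi
            have h1 := Finset.mem_sdiff.1 hi
            simp [proj, h1.1, hyf i h1.2]
        _ = φ S y := mul_one _
    calc ∑ y ∈ supp S, ∑ z ∈ supp Sᶜ, φ S (fun i => if i ∈ S then mix y z i else false)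
          * φ S' (fun i => if i ∈ S' then mix y z i else false)
          * ∏ i ∈ (S ∪ S')ᶜ, (if mix y z i then p else 1 - p)
        ≤ ∑ y ∈ supp S, φ S y := Finset.sum_le_sum hinner
      _ = 1 := hφ1' S
  -- per-pair bound
  have hpair : ∀ S S' : Finset (Fin n),
      ∑ x : Fin n → Bool,
        (μt S * φ S (fun i => if i ∈ S then x i else false)
            * ∏ i ∈ Sᶜ, (if x i then p else 1 - p))
          * (μt S' * φ S' (fun i => if i ∈ S' then x i else false)
            * ∏ i ∈ S'ᶜ, (if x i then p else 1 - p)) / ν x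
      ≤ μt S * μt S' * a ^ (S ∩ S').card := by
    intro S S'
    have hprodx : ∀ x : Fin n → Bool,
        (∏ i ∈ Sᶜ, (if x i then p else 1 - p)) * ∏ i ∈ S'ᶜ, (if x i then p else 1 - p)
        = ((∏ i ∈ (S ∪ S')ᶜ, (if x i then p else 1 - p))
            * ∏ i ∈ S ∩ S', ((if x i then p else 1 - p))⁻¹)
          * ∏ i, (if x i then p else 1 - p) := by
      intro x
      have h1 : (∏ i ∈ S ∩ S', (if x i then p else 1 - p))
          * ∏ i ∈ (S ∩ S')ᶜ, (if x i then p else 1 - p)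
          = ∏ i, (if x i then p else 1 - p) :=
        Finset.prod_mul_prod_compl (S ∩ S') _
      have h4 := Finset.prod_union_inter (s₁ := Sᶜ) (s₂ := S'ᶜ)
        (f := fun i => if x i then p else 1 - p)
      rw [← Finset.compl_inter, ← Finset.compl_union] at h4
      have h5 : ∏ i ∈ S ∩ S', ((if x i then p else 1 - p))⁻¹
          = (∏ i ∈ S ∩ S', (if x i then p else 1 - p))⁻¹ := by
        rw [Finset.prod_inv_distrib]
      have h6 : (∏ i ∈ S ∩ S', (if x i then p else 1 - p)) ≠ 0 :=
        ne_of_gt (Finset.prod_pos fun i _ => hbpos _)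
      rw [← h4, h5, ← h1]
      field_simp
    have hTbound : ∀ x : Fin n → Bool,
        (μt S * φ S (fun i => if i ∈ S then x i else false)
            * ∏ i ∈ Sᶜ, (if x i then p else 1 - p))
          * (μt S' * φ S' (fun i => if i ∈ S' then x i else false)
            * ∏ i ∈ S'ᶜ, (if x i then p else 1 - p)) / ν x
        ≤ (μt S * μt S' * a ^ (S ∩ S').card)
            * (φ S (fun i => if i ∈ S then x i else false)
              * φ S' (fun i => if i ∈ S' then x i else false)
              * ∏ i ∈ (S ∪ S')ᶜ, (if x i then p else 1 - p)) := by
      intro x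
      have hne : (∏ i, (if x i then p else 1 - p)) ≠ 0 :=
        ne_of_gt (Finset.prod_pos fun i _ => hbpos _)
      have heq : (μt S * φ S (fun i => if i ∈ S then x i else false)
            * ∏ i ∈ Sᶜ, (if x i then p else 1 - p))
          * (μt S' * φ S' (fun i => if i ∈ S' then x i else false)
            * ∏ i ∈ S'ᶜ, (if x i then p else 1 - p)) / ν x
          = ((μt S * μt S') * (φ S (fun i => if i ∈ S then x i else false)
              * φ S' (fun i => if i ∈ S' then x i else false)
              * ∏ i ∈ (S ∪ S')ᶜ, (if x i then p else 1 - p)))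
            * ∏ i ∈ S ∩ S', ((if x i then p else 1 - p))⁻¹ := by
        rw [hν x, div_eq_iff hne]
        calc (μt S * φ S (fun i => if i ∈ S then x i else false)
              * ∏ i ∈ Sᶜ, (if x i then p else 1 - p))
            * (μt S' * φ S' (fun i => if i ∈ S' then x i else false)
              * ∏ i ∈ S'ᶜ, (if x i then p else 1 - p))
            = (μt S * μt S') * (φ S (fun i => if i ∈ S then x i else false)
                * φ S' (fun i => if i ∈ S' then x i else false))
              * ((∏ i ∈ Sᶜ, (if x i then p else 1 - p))
                * ∏ i ∈ S'ᶜ, (if x i then p else 1 - p)) := by ring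
          _ = _ := by rw [hprodx x]; ring
      rw [heq]
      have hinvle : ∏ i ∈ S ∩ S', ((if x i then p else 1 - p))⁻¹ ≤ a ^ (S ∩ S').card := by
        rw [← Finset.prod_const]
        exact Finset.prod_le_prod (fun i _ => inv_nonneg.2 (hbpos _).le) (fun i _ => hbinv _)
      have hnn : 0 ≤ (μt S * μt S') * (φ S (fun i => if i ∈ S then x i else false)
          * φ S' (fun i => if i ∈ S' then x i else false)
          * ∏ i ∈ (S ∪ S')ᶜ, (if x i then p else 1 - p)) := by
        refine mul_nonneg (mul_nonneg (hμt0 S) (hμt0 S'))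
          (mul_nonneg (mul_nonneg (hφ0 _ _) (hφ0 _ _)) ?_)
        exact Finset.prod_nonneg fun i _ => (hbpos _).le
      calc ((μt S * μt S') * (φ S (fun i => if i ∈ S then x i else false)
              * φ S' (fun i => if i ∈ S' then x i else false)
              * ∏ i ∈ (S ∪ S')ᶜ, (if x i then p else 1 - p)))
            * ∏ i ∈ S ∩ S', ((if x i then p else 1 - p))⁻¹
          ≤ ((μt S * μt S') * (φ S (fun i => if i ∈ S then x i else false)
              * φ S' (fun i => if i ∈ S' then x i else false)
              * ∏ i ∈ (S ∪ S')ᶜ, (if x i then p else 1 - p))) * a ^ (S ∩ S').card :=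
            mul_le_mul_of_nonneg_left hinvle hnn
        _ = _ := by ring
    have hconst : 0 ≤ μt S * μt S' * a ^ (S ∩ S').card :=
      mul_nonneg (mul_nonneg (hμt0 S) (hμt0 S'))
        (pow_nonneg (le_trans zero_le_one ha1) _)
    calc ∑ x : Fin n → Bool,
          (μt S * φ S (fun i => if i ∈ S then x i else false)
              * ∏ i ∈ Sᶜ, (if x i then p else 1 - p))
            * (μt S' * φ S' (fun i => if i ∈ S' then x i else false)
              * ∏ i ∈ S'ᶜ, (if x i then p else 1 - p)) / ν x
        ≤ ∑ x : Fin n → Bool, (μt S * μt S' * a ^ (S ∩ S').card)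
            * (φ S (fun i => if i ∈ S then x i else false)
              * φ S' (fun i => if i ∈ S' then x i else false)
              * ∏ i ∈ (S ∪ S')ᶜ, (if x i then p else 1 - p)) :=
          Finset.sum_le_sum fun x _ => hTbound x
      _ = (μt S * μt S' * a ^ (S ∩ S').card)
            * ∑ x : Fin n → Bool, φ S (fun i => if i ∈ S then x i else false)
              * φ S' (fun i => if i ∈ S' then x i else false)
              * ∏ i ∈ (S ∪ S')ᶜ, (if x i then p else 1 - p) := by
          rw [Finset.mul_sum]
      _ ≤ (μt S * μt S' * a ^ (S ∩ S').card) * 1 :=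
          mul_le_mul_of_nonneg_left (hR S S') hconst
      _ = μt S * μt S' * a ^ (S ∩ S').card := mul_one _
  -- main chi-square bound
  have hmain : ∑ x : Fin n → Bool, (μ x) ^ 2 / ν x
      ≤ ∑ S : Finset (Fin n), ∑ S' : Finset (Fin n), μt S * μt S' * a ^ (S ∩ S').card := by
    have hexpand : ∀ x : Fin n → Bool, (μ x) ^ 2 / ν x
        = ∑ S : Finset (Fin n), ∑ S' : Finset (Fin n),
            (μt S * φ S (fun i => if i ∈ S then x i else false)
              * ∏ i ∈ Sᶜ, (if x i then p else 1 - p))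
            * (μt S' * φ S' (fun i => if i ∈ S' then x i else false)
              * ∏ i ∈ S'ᶜ, (if x i then p else 1 - p)) / ν x := by
      intro x
      rw [hμ x, sq, Finset.sum_mul_sum, Finset.sum_div]
      exact Finset.sum_congr rfl fun S _ => by rw [Finset.sum_div]
    rw [Finset.sum_congr rfl fun x _ => hexpand x]
    rw [Finset.sum_comm]
    refine le_trans (le_of_eq (Finset.sum_congr rfl fun S _ => Finset.sum_comm)) ?_
    exact Finset.sum_le_sum fun S _ => Finset.sum_le_sum fun S' _ => hpair S S'
  -- negative dependence + exponential bound
  have hexp : ∑ S : Finset (Fin n), ∑ S' : Finset (Fin n), μt S * μt S' * a ^ (S ∩ S').card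
      ≤ Real.exp ((a - 1) * ∑ i, (∑ S, if i ∈ S then μt S else 0) ^ 2) := by
    have ha0 : (0:ℝ) ≤ a - 1 := by linarith
    have hq0 : ∀ i, 0 ≤ ∑ S, if i ∈ S then μt S else 0 := by
      intro i
      refine Finset.sum_nonneg fun S _ => ?_
      by_cases h : i ∈ S <;> simp [h, hμt0 S]
    have hQ0 : ∀ B : Finset (Fin n), 0 ≤ ∑ S, if B ⊆ S then μt S else 0 := by
      intro B
      refine Finset.sum_nonneg fun S _ => ?_
      by_cases h : B ⊆ S <;> simp [h, hμt0 S]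
    have hpow : ∀ I : Finset (Fin n),
        a ^ I.card = ∑ B : Finset (Fin n), if B ⊆ I then (a - 1) ^ B.card else 0 := by
      intro I
      have h1 : a ^ I.card = ∑ B ∈ I.powerset, (a - 1) ^ B.card := by
        calc a ^ I.card = ∏ _i ∈ I, ((a - 1) + 1) := by
              rw [Finset.prod_const]; ring_nf
          _ = ∑ B ∈ I.powerset, (∏ _i ∈ B, (a - 1)) * ∏ _i ∈ I \ B, (1:ℝ) :=
              Finset.prod_add _ _ I
          _ = ∑ B ∈ I.powerset, (a - 1) ^ B.card := by simp [Finset.prod_const]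
      rw [h1, show I.powerset = Finset.univ.filter (fun B => B ⊆ I) from by ext B; simp,
        Finset.sum_filter]
    have hstep1 : ∑ S : Finset (Fin n), ∑ S' : Finset (Fin n), μt S * μt S' * a ^ (S ∩ S').card
        = ∑ B : Finset (Fin n), (a - 1) ^ B.card * (∑ S, if B ⊆ S then μt S else 0)
            * (∑ S', if B ⊆ S' then μt S' else 0) := by
      have hpt : ∀ S S' : Finset (Fin n), μt S * μt S' * a ^ (S ∩ S').card
          = ∑ B : Finset (Fin n),
              (if B ⊆ S then μt S else 0) * (if B ⊆ S' then μt S' else 0)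
                * (a - 1) ^ B.card := by
        intro S S'
        rw [hpow (S ∩ S'), Finset.mul_sum]
        refine Finset.sum_congr rfl fun B _ => ?_
        by_cases h1 : B ⊆ S <;> by_cases h2 : B ⊆ S' <;>
          simp [Finset.subset_inter_iff, h1, h2]
      calc ∑ S : Finset (Fin n), ∑ S' : Finset (Fin n), μt S * μt S' * a ^ (S ∩ S').card
          = ∑ S : Finset (Fin n), ∑ S' : Finset (Fin n), ∑ B : Finset (Fin n),
              (if B ⊆ S then μt S else 0) * (if B ⊆ S' then μt S' else 0)
                * (a - 1) ^ B.card := by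
            exact Finset.sum_congr rfl fun S _ => Finset.sum_congr rfl fun S' _ => hpt S S'
        _ = ∑ S : Finset (Fin n), ∑ B : Finset (Fin n), ∑ S' : Finset (Fin n),
              (if B ⊆ S then μt S else 0) * (if B ⊆ S' then μt S' else 0)
                * (a - 1) ^ B.card :=
            Finset.sum_congr rfl fun S _ => Finset.sum_comm
        _ = ∑ B : Finset (Fin n), ∑ S : Finset (Fin n), ∑ S' : Finset (Fin n),
              (if B ⊆ S then μt S else 0) * (if B ⊆ S' then μt S' else 0)
                * (a - 1) ^ B.card := Finset.sum_comm
        _ = _ := by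
            refine Finset.sum_congr rfl fun B _ => ?_
            calc ∑ S : Finset (Fin n), ∑ S' : Finset (Fin n),
                  (if B ⊆ S then μt S else 0) * (if B ⊆ S' then μt S' else 0)
                    * (a - 1) ^ B.card
                = (∑ S : Finset (Fin n), ∑ S' : Finset (Fin n),
                    (if B ⊆ S then μt S else 0) * (if B ⊆ S' then μt S' else 0))
                  * (a - 1) ^ B.card := by
                  rw [Finset.sum_mul]
                  exact Finset.sum_congr rfl fun S _ => by rw [Finset.sum_mul]
              _ = ((∑ S, if B ⊆ S then μt S else 0) * (∑ S', if B ⊆ S' then μt S' else 0))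
                  * (a - 1) ^ B.card := by rw [← Finset.sum_mul_sum]
              _ = _ := by ring
    have hkeyB : ∀ B : Finset (Fin n),
        (a - 1) ^ B.card * (∑ S, if B ⊆ S then μt S else 0)
            * (∑ S', if B ⊆ S' then μt S' else 0)
        ≤ ∏ i ∈ B, ((a - 1) * (∑ S, if i ∈ S then μt S else 0) ^ 2) := by
      intro B
      have h1 := hND B
      have h2 : (∑ S, if B ⊆ S then μt S else 0) * (∑ S, if B ⊆ S then μt S else 0)
          ≤ (∏ i ∈ B, ∑ S, if i ∈ S then μt S else 0)
            * ∏ i ∈ B, ∑ S, if i ∈ S then μt S else 0 :=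
        mul_le_mul h1 h1 (hQ0 B) (Finset.prod_nonneg fun i _ => hq0 i)
      have h3 : (a - 1) ^ B.card * ((∑ S, if B ⊆ S then μt S else 0)
            * (∑ S, if B ⊆ S then μt S else 0))
          ≤ (a - 1) ^ B.card * ((∏ i ∈ B, ∑ S, if i ∈ S then μt S else 0)
            * ∏ i ∈ B, ∑ S, if i ∈ S then μt S else 0) :=
        mul_le_mul_of_nonneg_left h2 (pow_nonneg ha0 _)
      have h4 : (a - 1) ^ B.card * ((∏ i ∈ B, ∑ S, if i ∈ S then μt S else 0)
            * ∏ i ∈ B, ∑ S, if i ∈ S then μt S else 0)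
          = ∏ i ∈ B, ((a - 1) * (∑ S, if i ∈ S then μt S else 0) ^ 2) := by
        rw [Finset.prod_mul_distrib, Finset.prod_const, Finset.prod_pow]
        ring
      calc (a - 1) ^ B.card * (∑ S, if B ⊆ S then μt S else 0)
            * (∑ S', if B ⊆ S' then μt S' else 0)
          = (a - 1) ^ B.card * ((∑ S, if B ⊆ S then μt S else 0)
            * (∑ S, if B ⊆ S then μt S else 0)) := by ring
        _ ≤ _ := h3
        _ = _ := h4
    have hsumprod : ∑ B : Finset (Fin n),
          ∏ i ∈ B, ((a - 1) * (∑ S, if i ∈ S then μt S else 0) ^ 2)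
        = ∏ i, ((a - 1) * (∑ S, if i ∈ S then μt S else 0) ^ 2 + 1) := by
      calc ∑ B : Finset (Fin n), ∏ i ∈ B, ((a - 1) * (∑ S, if i ∈ S then μt S else 0) ^ 2)
          = ∑ B ∈ (Finset.univ : Finset (Fin n)).powerset,
              (∏ i ∈ B, ((a - 1) * (∑ S, if i ∈ S then μt S else 0) ^ 2))
                * ∏ i ∈ Finset.univ \ B, (1:ℝ) := by
            rw [Finset.powerset_univ]
            exact Finset.sum_congr rfl fun B _ => by simp
        _ = ∏ i, ((a - 1) * (∑ S, if i ∈ S then μt S else 0) ^ 2 + 1) :=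
            (Finset.prod_add _ _ _).symm
    have hprodexp : ∏ i, ((a - 1) * (∑ S, if i ∈ S then μt S else 0) ^ 2 + 1)
        ≤ Real.exp ((a - 1) * ∑ i, (∑ S, if i ∈ S then μt S else 0) ^ 2) := by
      rw [Finset.mul_sum, Real.exp_sum]
      refine Finset.prod_le_prod (fun i _ => ?_) (fun i _ => ?_)
      · have := mul_nonneg ha0 (sq_nonneg (∑ S, if i ∈ S then μt S else 0))
        linarith
      · have := Real.add_one_le_exp ((a - 1) * (∑ S, if i ∈ S then μt S else 0) ^ 2)
        linarith
    calc ∑ S : Finset (Fin n), ∑ S' : Finset (Fin n), μt S * μt S' * a ^ (S ∩ S').card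
        = ∑ B : Finset (Fin n), (a - 1) ^ B.card * (∑ S, if B ⊆ S then μt S else 0)
            * (∑ S', if B ⊆ S' then μt S' else 0) := hstep1
      _ ≤ ∑ B : Finset (Fin n),
            ∏ i ∈ B, ((a - 1) * (∑ S, if i ∈ S then μt S else 0) ^ 2) :=
          Finset.sum_le_sum fun B _ => hkeyB B
      _ = ∏ i, ((a - 1) * (∑ S, if i ∈ S then μt S else 0) ^ 2 + 1) := hsumprod
      _ ≤ _ := hprodexp
  linarith [hCS, hχ, hmain, hexp]
end
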